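/- Let (X, d_X) and (Y, d_Y) be non-Archimedean metric spaces. For any maps f, g : X → Y, one has ρ_H(f, g) ≤ ρ_u(f, g). In particular, if both f and g are nonexpanding (i.e., d_Y(f(x₁), f(x₂)) ≤ d_X(x₁, x₂) for all x₁, x₂, and likewise for g), then ρ_H(f, g) = ρ_u(f, g). -/

import Mathlib

open scoped ENNReal

/-- The graph of a map `f : X → Y`, as a subset of `X × Y`. -/
def graphOf {X Y : Type*} (f : X → Y) : Set (X × Y) :=
  Set.range fun x => (x, f x)

/-- `ρ_H(f,g)`: the Hausdorff distance between the graphs of `f` and `g` in the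
product `X × Y` equipped with the sup-metric (which is the product metric in Mathlib). -/
noncomputable def rhoH {X Y : Type*} [MetricSpace X] [MetricSpace Y] (f g : X → Y) : ℝ≥0∞ :=
  EMetric.hausdorffEdist (graphOf f) (graphOf g)

/-- `ρ_s(f,g) = sup_x d_Y(f x, g x)`. -/
noncomputable def rhoS {X Y : Type*} [MetricSpace X] [MetricSpace Y] (f g : X → Y) : ℝ≥0∞ :=
  ⨆ x : X, edist (f x) (g x)

-- `ρ_u(f,g)`: zero if `f = g`; otherwise the infimum of those `ε > 0` for which there
-- exists `δ > 0` with `sup_{x' ∈ B_x(δ)} d_Y(f x, g x') ≤ ε` and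
-- `sup_{x' ∈ B_x(δ)} d_Y(g x, f x') ≤ ε` for all `x ∈ X` (`∞` if there is no such `ε`).
open Classical in
noncomputable def rhoU {X Y : Type*} [MetricSpace X] [MetricSpace Y] (f g : X → Y) : ℝ≥0∞ :=
  if f = g then 0 else
    sInf {ε : ℝ≥0∞ | 0 < ε ∧ ∃ δ : ℝ≥0∞, 0 < δ ∧ ∀ x x' : X, edist x x' < δ →
      edist (f x) (g x') ≤ ε ∧ edist (g x) (f x') ≤ ε}

lemma na_edist {α : Type*} [MetricSpace α]
    (h : ∀ x y z : α, dist x z ≤ max (dist x y) (dist y z)) (x y z : α) :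
    edist x z ≤ max (edist x y) (edist y z) := by
  rw [edist_dist, edist_dist, edist_dist]
  calc ENNReal.ofReal (dist x z) ≤ ENNReal.ofReal (max (dist x y) (dist y z)) :=
        ENNReal.ofReal_le_ofReal (h x y z)
    _ = max (ENNReal.ofReal (dist x y)) (ENNReal.ofReal (dist y z)) :=
        Monotone.map_max (fun _ _ hab => ENNReal.ofReal_le_ofReal hab)

lemma lip_edist {α β : Type*} [MetricSpace α] [MetricSpace β] {f : α → β}
    (h : ∀ x₁ x₂ : α, dist (f x₁) (f x₂) ≤ dist x₁ x₂) (x₁ x₂ : α) :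
    edist (f x₁) (f x₂) ≤ edist x₁ x₂ := by
  rw [edist_dist, edist_dist]
  exact ENNReal.ofReal_le_ofReal (h x₁ x₂)

theorem stmt_13 {X Y : Type*} [MetricSpace X] [MetricSpace Y]
    (hnaX : ∀ x y z : X, dist x z ≤ max (dist x y) (dist y z))
    (hnaY : ∀ x y z : Y, dist x z ≤ max (dist x y) (dist y z))
    (f g : X → Y) :
    rhoH f g ≤ rhoU f g ∧
    ((∀ x₁ x₂ : X, dist (f x₁) (f x₂) ≤ dist x₁ x₂) →
     (∀ x₁ x₂ : X, dist (g x₁) (g x₂) ≤ dist x₁ x₂) →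
     rhoH f g = rhoU f g) := by
  have hle : rhoH f g ≤ rhoU f g := by
    unfold rhoH rhoU
    by_cases hfg : f = g
    · simp [hfg]
      exact Metric.hausdorffEDist_self
    · rw [if_neg hfg]
      refine le_sInf fun ε hε => ?_
      obtain ⟨-, δ, hδ, hb⟩ := hε
      refine EMetric.hausdorffEdist_le_of_mem_edist ?_ ?_
      · rintro p ⟨x, rfl⟩
        refine ⟨(x, g x), ⟨x, rfl⟩, ?_⟩
        have := (hb x x (by simp [hδ])).1
        simpa [Prod.edist_eq] using this
      · rintro p ⟨x, rfl⟩
        refine ⟨(x, f x), ⟨x, rfl⟩, ?_⟩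
        have := (hb x x (by simp [hδ])).2
        simpa [Prod.edist_eq, edist_comm] using this
  refine ⟨hle, fun hf hg => ?_⟩
  refine le_antisymm hle ?_
  unfold rhoU
  by_cases hfg : f = g
  · simp [hfg]
  rw [if_neg hfg]
  by_contra hlt
  push_neg at hlt
  obtain ⟨ε, hε1, hε2⟩ := exists_between hlt
  have hεpos : 0 < ε := lt_of_le_of_lt zero_le hε1
  have hmem : ε ∈ {ε : ℝ≥0∞ | 0 < ε ∧ ∃ δ : ℝ≥0∞, 0 < δ ∧ ∀ x x' : X, edist x x' < δ →
      edist (f x) (g x') ≤ ε ∧ edist (g x) (f x') ≤ ε} := by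
    refine ⟨hεpos, ε, hεpos, fun x x' hxx' => ?_⟩
    constructor
    · obtain ⟨q, hq, hq2⟩ := EMetric.exists_edist_lt_of_hausdorffEdist_lt
        (s := graphOf f) (t := graphOf g) ⟨x, rfl⟩ hε1
      obtain ⟨u, rfl⟩ := hq
      rw [Prod.edist_eq, max_lt_iff] at hq2
      have h1 : edist (f x) (g u) < ε := hq2.2
      have h2 : edist (g u) (g x') ≤ max (edist u x) (edist x x') :=
        (lip_edist hg u x').trans (na_edist hnaX u x x')
      have h3 : edist u x < ε := by rw [edist_comm]; exact hq2.1
      calc edist (f x) (g x') ≤ max (edist (f x) (g u)) (edist (g u) (g x')) :=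
            na_edist hnaY _ _ _
        _ ≤ ε := max_le h1.le (h2.trans (max_le h3.le hxx'.le))
    · have hsymm : EMetric.hausdorffEdist (graphOf g) (graphOf f) < ε := by
        show Metric.hausdorffEDist (graphOf g) (graphOf f) < ε
        rw [Metric.hausdorffEDist_comm]
        exact hε1
      obtain ⟨q, hq, hq2⟩ := EMetric.exists_edist_lt_of_hausdorffEdist_lt
        (s := graphOf g) (t := graphOf f) ⟨x, rfl⟩ hsymm
      obtain ⟨u, rfl⟩ := hq
      rw [Prod.edist_eq, max_lt_iff] at hq2
      have h1 : edist (g x) (f u) < ε := hq2.2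
      have h2 : edist (f u) (f x') ≤ max (edist u x) (edist x x') :=
        (lip_edist hf u x').trans (na_edist hnaX u x x')
      have h3 : edist u x < ε := by rw [edist_comm]; exact hq2.1
      calc edist (g x) (f x') ≤ max (edist (g x) (f u)) (edist (f u) (f x')) :=
            na_edist hnaY _ _ _
        _ ≤ ε := max_le h1.le (h2.trans (max_le h3.le hxx'.le))
  exact absurd (sInf_le hmem) (not_le.mpr hε2)
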